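/- Let a, b ≥ 1 and let ψ ∈ ℂ^a ⊗ ℂ^b be a unit vector. Then there exist finitely many unit vectors u_j ∈ ℂ^a and v_j ∈ ℂ^b and real numbers η_j with Σ_j η_j = 1 such that the rank-one projection |ψ⟩⟨ψ| equals Σ_j η_j (|u_j⟩⟨u_j| ⊗ |v_j⟩⟨v_j|), where ⊗ denotes the tensor (Kronecker) product of operators. -/

import Mathlib

open Matrix
open scoped Kronecker
open Complex

noncomputable section QPD

def qpdE (n : ℕ) (x : Fin n) : Fin n → ℂ := fun i => if i = x then 1 else 0

def qpdW (n : ℕ) (x x' : Fin n) (k : Fin 4) : Fin n → ℂ :=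
  fun i => qpdE n x i + I ^ (k:ℕ) * qpdE n x' i

def qpdN (n : ℕ) (f : Fin n → ℂ) : ℝ := ∑ i, ‖f i‖ ^ 2

def qpdU (n : ℕ) (hn : 1 ≤ n) (f : Fin n → ℂ) : Fin n → ℂ :=
  if qpdN n f = 0 then qpdE n ⟨0, hn⟩ else fun i => ((Real.sqrt (qpdN n f) : ℝ) : ℂ)⁻¹ * f i

lemma qpdN_nonneg (n : ℕ) (f : Fin n → ℂ) : 0 ≤ qpdN n f :=
  Finset.sum_nonneg fun i _ => by positivity

lemma qpd_zero_of_N (n : ℕ) (f : Fin n → ℂ) (h : qpdN n f = 0) : ∀ i, f i = 0 := by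
  intro i
  have := (Finset.sum_eq_zero_iff_of_nonneg
    (fun i _ => by positivity : ∀ i ∈ Finset.univ, (0:ℝ) ≤ ‖f i‖^2)).1 h i (Finset.mem_univ i)
  have : ‖f i‖ = 0 := by nlinarith [norm_nonneg (f i)]
  simpa using this

lemma qpdE_unit (n : ℕ) (x : Fin n) : ∑ i, ‖qpdE n x i‖ ^ 2 = 1 := by
  simp [qpdE, apply_ite norm, Finset.sum_ite_eq']

lemma qpdU_unit (n : ℕ) (hn : 1 ≤ n) (f : Fin n → ℂ) : ∑ i, ‖qpdU n hn f i‖ ^ 2 = 1 := by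
  by_cases h : qpdN n f = 0
  · simpa [qpdU, h] using qpdE_unit n ⟨0, hn⟩
  · have hpos : 0 < qpdN n f := lt_of_le_of_ne (qpdN_nonneg n f) (Ne.symm h)
    simp only [qpdU, h, if_false]
    have : ∀ i, ‖(((Real.sqrt (qpdN n f) : ℝ) : ℂ))⁻¹ * f i‖ ^ 2 = (qpdN n f)⁻¹ * ‖f i‖^2 := by
      intro i
      rw [norm_mul, mul_pow, norm_inv, Complex.norm_real, Real.norm_eq_abs,
        _root_.abs_of_nonneg (Real.sqrt_nonneg _), ← Real.sqrt_inv, Real.sq_sqrt (by positivity)]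
    rw [Finset.sum_congr rfl fun i _ => this i, ← Finset.mul_sum]
    exact inv_mul_cancel₀ h

lemma polar4 (A B C D : ℂ) :
    ∑ k : Fin 4, (I ^ (k:ℕ)) * ((A + I ^ (k:ℕ) * B) * (starRingEnd ℂ) (C + I ^ (k:ℕ) * D))
      = 4 * (A * (starRingEnd ℂ) D) := by
  have h3 : (I:ℂ)^3 = -I := by rw [pow_succ, Complex.I_sq]; ring
  have h4 : (I:ℂ)^4 = 1 := Complex.I_pow_four
  have h6 : (I:ℂ)^6 = -1 := by rw [show (6:ℕ) = 2*3 from rfl, pow_mul, Complex.I_sq]; ring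
  have h9 : (I:ℂ)^9 = I := by
    rw [show (9:ℕ) = 8+1 from rfl, pow_succ, show (8:ℕ)=2*4 from rfl, pow_mul, Complex.I_sq]; ring
  simp only [Fin.sum_univ_four, show ((0:Fin 4):ℕ) = 0 from rfl, show ((1:Fin 4):ℕ) = 1 from rfl,
    show ((2:Fin 4):ℕ) = 2 from rfl, show ((3:Fin 4):ℕ) = 3 from rfl, _root_.map_add,
    _root_.map_mul, _root_.map_pow, Complex.conj_I]
  ring_nf
  rw [h3, h6, h9, Complex.I_sq]
  ring_nf
  rw [h4]
  ring

lemma polarW (n : ℕ) (x x' : Fin n) (i j : Fin n) :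
    ∑ k : Fin 4, I ^ (k:ℕ) * (qpdW n x x' k i * (starRingEnd ℂ) (qpdW n x x' k j))
      = 4 * (qpdE n x i * (starRingEnd ℂ) (qpdE n x' j)) := by
  simpa [qpdW] using polar4 (qpdE n x i) (qpdE n x' i) (qpdE n x j) (qpdE n x' j)

lemma keySum (a b : ℕ) (ψ : Fin a × Fin b → ℂ) (i1 j1 : Fin a) (i2 j2 : Fin b) :
    ∑ j : (Fin a × Fin b) × (Fin a × Fin b) × Fin 4 × Fin 4,
      ψ j.1 * (starRingEnd ℂ) (ψ j.2.1) * (I ^ ((j.2.2.1 : Fin 4):ℕ) * I ^ ((j.2.2.2 : Fin 4):ℕ)) / 16 *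
        ((qpdW a j.1.1 j.2.1.1 j.2.2.1 i1 * (starRingEnd ℂ) (qpdW a j.1.1 j.2.1.1 j.2.2.1 j1)) *
         (qpdW b j.1.2 j.2.1.2 j.2.2.2 i2 * (starRingEnd ℂ) (qpdW b j.1.2 j.2.1.2 j.2.2.2 j2)))
      = ψ (i1, i2) * (starRingEnd ℂ) (ψ (j1, j2)) := by
  simp only [Fintype.sum_prod_type]
  have inner : ∀ (p1 : Fin a) (p2 : Fin b) (q1 : Fin a) (q2 : Fin b),
      (∑ k : Fin 4, ∑ l : Fin 4,
        ψ (p1,p2) * (starRingEnd ℂ) (ψ (q1,q2)) * (I ^ (k:ℕ) * I ^ (l:ℕ)) / 16 *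
          ((qpdW a p1 q1 k i1 * (starRingEnd ℂ) (qpdW a p1 q1 k j1)) *
           (qpdW b p2 q2 l i2 * (starRingEnd ℂ) (qpdW b p2 q2 l j2))))
      = ψ (p1,p2) * (starRingEnd ℂ) (ψ (q1,q2)) *
          ((qpdE a p1 i1 * (starRingEnd ℂ) (qpdE a q1 j1)) *
           (qpdE b p2 i2 * (starRingEnd ℂ) (qpdE b q2 j2))) := by
    intro p1 p2 q1 q2
    calc (∑ k : Fin 4, ∑ l : Fin 4,
        ψ (p1,p2) * (starRingEnd ℂ) (ψ (q1,q2)) * (I ^ (k:ℕ) * I ^ (l:ℕ)) / 16 *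
          ((qpdW a p1 q1 k i1 * (starRingEnd ℂ) (qpdW a p1 q1 k j1)) *
           (qpdW b p2 q2 l i2 * (starRingEnd ℂ) (qpdW b p2 q2 l j2))))
        = ψ (p1,p2) * (starRingEnd ℂ) (ψ (q1,q2)) / 16 *
            ((∑ k : Fin 4, I ^ (k:ℕ) * (qpdW a p1 q1 k i1 * (starRingEnd ℂ) (qpdW a p1 q1 k j1))) *
             (∑ l : Fin 4, I ^ (l:ℕ) * (qpdW b p2 q2 l i2 * (starRingEnd ℂ) (qpdW b p2 q2 l j2)))) := by
          rw [Finset.sum_mul_sum, Finset.mul_sum]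
          exact Finset.sum_congr rfl fun k _ => by
            rw [Finset.mul_sum]; exact Finset.sum_congr rfl fun l _ => by ring
      _ = _ := by rw [polarW, polarW]; ring
  rw [Finset.sum_congr rfl fun p1 _ => Finset.sum_congr rfl fun p2 _ =>
    Finset.sum_congr rfl fun q1 _ => Finset.sum_congr rfl fun q2 _ => inner p1 p2 q1 q2]
  simp [qpdE, apply_ite (starRingEnd ℂ), mul_ite, ite_mul, Finset.sum_ite_eq]

lemma qpd_inv (k : Fin 4) : (I:ℂ)^(((-k):Fin 4):ℕ) * (I:ℂ)^((k:Fin 4):ℕ) = 1 := by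
  have h : (((-k):Fin 4):ℕ) + ((k:Fin 4):ℕ) = 0 ∨ (((-k):Fin 4):ℕ) + ((k:Fin 4):ℕ) = 4 := by
    revert k; decide
  rcases h with h | h <;> rw [← pow_add, h]
  · exact pow_zero I
  · exact Complex.I_pow_four

lemma qpd_pow_mul_conj (k : Fin 4) : (I:ℂ)^(k:ℕ) * (starRingEnd ℂ) ((I:ℂ)^(k:ℕ)) = 1 := by
  rw [Complex.mul_conj, map_pow, Complex.normSq_I, one_pow, Complex.ofReal_one]

lemma qpd_neg_pow (k : Fin 4) : (I:ℂ) ^ (((-k) : Fin 4):ℕ) = (starRingEnd ℂ) (I ^ (k:ℕ)) := by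
  have h1 := qpd_inv k
  have h2 := qpd_pow_mul_conj k
  simp only [map_pow, Complex.conj_I] at h2 ⊢
  have key : (I:ℂ)^((-k:Fin 4):ℕ) * ((I:ℂ)^((k:Fin 4):ℕ) * (-I:ℂ)^((k:Fin 4):ℕ))
      = (-I:ℂ)^((k:Fin 4):ℕ) * ((I:ℂ)^((-k:Fin 4):ℕ) * (I:ℂ)^((k:Fin 4):ℕ)) := by ring
  rw [h1, h2, mul_one, mul_one] at key
  exact key

lemma qpdW_neg (n : ℕ) (x x' : Fin n) (k : Fin 4) (i : Fin n) :
    qpdW n x' x (-k) i = I^(((-k):Fin 4):ℕ) * qpdW n x x' k i := by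
  have h := qpd_inv k
  simp only [qpdW]
  linear_combination qpdE n x' i * h.symm

lemma vmv_W_neg (n : ℕ) (x x' : Fin n) (k : Fin 4) :
    vecMulVec (qpdW n x' x (-k)) (star (qpdW n x' x (-k)))
      = vecMulVec (qpdW n x x' k) (star (qpdW n x x' k)) := by
  ext i j
  simp only [vecMulVec_apply, Pi.star_apply, RCLike.star_def]
  rw [qpdW_neg, qpdW_neg, _root_.map_mul]
  have h := qpd_pow_mul_conj (-k)
  linear_combination (qpdW n x x' k i * (starRingEnd ℂ) (qpdW n x x' k j)) * h

def qpdC (a b : ℕ) (ψ : Fin a × Fin b → ℂ)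
    (j : (Fin a × Fin b) × (Fin a × Fin b) × Fin 4 × Fin 4) : ℂ :=
  ψ j.1 * (starRingEnd ℂ) (ψ j.2.1) * (I ^ ((j.2.2.1 : Fin 4):ℕ) * I ^ ((j.2.2.2 : Fin 4):ℕ))

def qpdS (a b : ℕ) : ((Fin a × Fin b) × (Fin a × Fin b) × Fin 4 × Fin 4) →
    ((Fin a × Fin b) × (Fin a × Fin b) × Fin 4 × Fin 4) :=
  fun j => (j.2.1, j.1, (-j.2.2.1, -j.2.2.2))

lemma qpdS_inv (a b : ℕ) : Function.Involutive (qpdS a b) := by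
  intro j; simp [qpdS]

lemma qpdC_sym (a b : ℕ) (ψ : Fin a × Fin b → ℂ) (j) :
    (starRingEnd ℂ) (qpdC a b ψ (qpdS a b j)) = qpdC a b ψ j := by
  simp only [qpdC, qpdS, _root_.map_mul, qpd_neg_pow, Complex.conj_conj]
  ring

def qpdK (a b : ℕ) (j : (Fin a × Fin b) × (Fin a × Fin b) × Fin 4 × Fin 4) :
    Matrix (Fin a × Fin b) (Fin a × Fin b) ℂ :=
  vecMulVec (qpdW a j.1.1 j.2.1.1 j.2.2.1) (star (qpdW a j.1.1 j.2.1.1 j.2.2.1)) ⊗ₖ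
    vecMulVec (qpdW b j.1.2 j.2.1.2 j.2.2.2) (star (qpdW b j.1.2 j.2.1.2 j.2.2.2))

lemma qpdK_sym (a b : ℕ) (j) : qpdK a b (qpdS a b j) = qpdK a b j := by
  simp only [qpdK, qpdS]
  rw [vmv_W_neg, vmv_W_neg]

lemma qpd_mul_conj (z : ℂ) : z * (starRingEnd ℂ) z = ((‖z‖^2 : ℝ) : ℂ) := by
  rw [Complex.mul_conj, Complex.normSq_eq_norm_sq]

lemma bigSum (a b : ℕ) (ψ : Fin a × Fin b → ℂ) :
    vecMulVec ψ (star ψ) =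
      ∑ j : (Fin a × Fin b) × (Fin a × Fin b) × Fin 4 × Fin 4,
        ((((qpdC a b ψ j).re : ℝ) : ℂ) / 16) • qpdK a b j := by
  have hc : (∑ j : (Fin a × Fin b) × (Fin a × Fin b) × Fin 4 × Fin 4,
      (qpdC a b ψ j / 16) • qpdK a b j) = vecMulVec ψ (star ψ) := by
    ext i j'
    obtain ⟨i1, i2⟩ := i
    obtain ⟨j1, j2⟩ := j'
    simp only [Matrix.sum_apply, Matrix.smul_apply, qpdK, kroneckerMap_apply, vecMulVec_apply,
      Pi.star_apply, RCLike.star_def, smul_eq_mul, qpdC]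
    rw [← keySum a b ψ i1 j1 i2 j2]
  have hcc : (∑ j : (Fin a × Fin b) × (Fin a × Fin b) × Fin 4 × Fin 4,
      ((starRingEnd ℂ) (qpdC a b ψ j) / 16) • qpdK a b j)
      = ∑ j : (Fin a × Fin b) × (Fin a × Fin b) × Fin 4 × Fin 4,
        (qpdC a b ψ j / 16) • qpdK a b j := by
    refine (Fintype.sum_bijective (qpdS a b) (qpdS_inv a b).bijective _ _ fun j => ?_).symm
    rw [qpdC_sym, qpdK_sym]
  have hsplit : ∀ j, ((((qpdC a b ψ j).re : ℝ) : ℂ) / 16) • qpdK a b j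
      = (2⁻¹ : ℂ) • ((qpdC a b ψ j / 16) • qpdK a b j
          + ((starRingEnd ℂ) (qpdC a b ψ j) / 16) • qpdK a b j) := by
    intro j
    rw [smul_add, smul_smul, smul_smul, ← add_smul]
    congr 1
    have h := Complex.add_conj (qpdC a b ψ j)
    push_cast at h
    linear_combination (-(1/32) : ℂ) * h
  rw [Finset.sum_congr rfl fun j _ => hsplit j, ← Finset.smul_sum, Finset.sum_add_distrib,
    hcc, hc]
  rw [← two_smul ℂ, smul_smul]
  norm_num

lemma termEq (a b : ℕ) (ha : 1 ≤ a) (hb : 1 ≤ b) (f : Fin a → ℂ) (g : Fin b → ℂ) (r : ℝ) :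
    ((r / 16 * (qpdN a f * qpdN b g) : ℝ) : ℂ) •
        (vecMulVec (qpdU a ha f) (star (qpdU a ha f)) ⊗ₖ
          vecMulVec (qpdU b hb g) (star (qpdU b hb g)))
      = (((r : ℝ) : ℂ) / 16) • (vecMulVec f (star f) ⊗ₖ vecMulVec g (star g)) := by
  by_cases hf : qpdN a f = 0
  · have hf0 : vecMulVec f (star f) = 0 := by
      ext i j; simp [vecMulVec_apply, qpd_zero_of_N a f hf]
    have h0 : (r / 16 * (qpdN a f * qpdN b g)) = 0 := by rw [hf]; ring
    rw [h0, hf0, Complex.ofReal_zero, zero_smul, Matrix.zero_kronecker, smul_zero]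
  by_cases hg : qpdN b g = 0
  · have hg0 : vecMulVec g (star g) = 0 := by
      ext i j; simp [vecMulVec_apply, qpd_zero_of_N b g hg]
    have h0 : (r / 16 * (qpdN a f * qpdN b g)) = 0 := by rw [hg]; ring
    rw [h0, hg0, Complex.ofReal_zero, zero_smul, Matrix.kronecker_zero, smul_zero]
  · have hfp : 0 < qpdN a f := lt_of_le_of_ne (qpdN_nonneg a f) (Ne.symm hf)
    have hgp : 0 < qpdN b g := lt_of_le_of_ne (qpdN_nonneg b g) (Ne.symm hg)
    have hs : ((Real.sqrt (qpdN a f) : ℝ) : ℂ) * ((Real.sqrt (qpdN a f) : ℝ) : ℂ)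
        = ((qpdN a f : ℝ) : ℂ) := by
      norm_cast; exact Real.mul_self_sqrt hfp.le
    have ht : ((Real.sqrt (qpdN b g) : ℝ) : ℂ) * ((Real.sqrt (qpdN b g) : ℝ) : ℂ)
        = ((qpdN b g : ℝ) : ℂ) := by
      norm_cast; exact Real.mul_self_sqrt hgp.le
    have hsne : ((Real.sqrt (qpdN a f) : ℝ) : ℂ) ≠ 0 :=
      Complex.ofReal_ne_zero.mpr (by positivity)
    have htne : ((Real.sqrt (qpdN b g) : ℝ) : ℂ) ≠ 0 :=
      Complex.ofReal_ne_zero.mpr (by positivity)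
    ext i j'
    obtain ⟨i1, i2⟩ := i
    obtain ⟨j1, j2⟩ := j'
    simp only [Matrix.smul_apply, kroneckerMap_apply, vecMulVec_apply, Pi.star_apply,
      RCLike.star_def, smul_eq_mul, qpdU, if_neg hf, if_neg hg, _root_.map_mul, map_inv₀,
      Complex.conj_ofReal, Complex.ofReal_mul, Complex.ofReal_div, Complex.ofReal_ofNat]
    field_simp
    rw [← hs, ← ht]
    ring

/-- every bipartite pure-state projection `|ψ⟩⟨ψ|` is a
quasi-probabilistic mixture (real coefficients summing to 1) of tensor
products of pure-state projections. -/
theorem pure_state_quasiProb_product_decomposition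
    (a b : ℕ) (ha : 1 ≤ a) (hb : 1 ≤ b)
    (ψ : Fin a × Fin b → ℂ)
    (hψ : ∑ x, ‖ψ x‖ ^ 2 = 1) :
    ∃ (k : ℕ) (u : Fin k → Fin a → ℂ) (v : Fin k → Fin b → ℂ) (η : Fin k → ℝ),
      (∀ j, ∑ i, ‖u j i‖ ^ 2 = 1) ∧
      (∀ j, ∑ i, ‖v j i‖ ^ 2 = 1) ∧
      (∑ j, η j = 1) ∧
      vecMulVec ψ (star ψ) =
        ∑ j, (η j : ℂ) •
          (vecMulVec (u j) (star (u j)) ⊗ₖ vecMulVec (v j) (star (v j))) := by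
  classical
  set J := ((Fin a × Fin b) × (Fin a × Fin b) × Fin 4 × Fin 4) with hJ
  let U : J → Fin a → ℂ := fun j => qpdU a ha (qpdW a j.1.1 j.2.1.1 j.2.2.1)
  let V : J → Fin b → ℂ := fun j => qpdU b hb (qpdW b j.1.2 j.2.1.2 j.2.2.2)
  let η : J → ℝ := fun j => (qpdC a b ψ j).re / 16 *
    (qpdN a (qpdW a j.1.1 j.2.1.1 j.2.2.1) * qpdN b (qpdW b j.1.2 j.2.1.2 j.2.2.2))
  have hG : vecMulVec ψ (star ψ) = ∑ j : J, ((η j : ℝ) : ℂ) •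
      (vecMulVec (U j) (star (U j)) ⊗ₖ vecMulVec (V j) (star (V j))) := by
    rw [bigSum a b ψ]
    exact Finset.sum_congr rfl fun j _ => by
      rw [termEq a b ha hb _ _ ((qpdC a b ψ j).re)]
      rfl
  have hUu : ∀ j : J, ∑ i, ‖U j i‖ ^ 2 = 1 := fun j => qpdU_unit a ha _
  have hVu : ∀ j : J, ∑ i, ‖V j i‖ ^ 2 = 1 := fun j => qpdU_unit b hb _
  -- trace argument for the sum of coefficients
  have htr : ((∑ j : J, η j : ℝ) : ℂ) = 1 := by
    have h := congrArg Matrix.trace hG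
    have hL : Matrix.trace (vecMulVec ψ (star ψ)) = ((1 : ℝ) : ℂ) := by
      simp only [Matrix.trace, Matrix.diag_apply, vecMulVec_apply, Pi.star_apply,
        RCLike.star_def]
      rw [Finset.sum_congr rfl fun x _ => qpd_mul_conj (ψ x), ← Complex.ofReal_sum, hψ]
    have hR : Matrix.trace (∑ j : J, ((η j : ℝ) : ℂ) •
        (vecMulVec (U j) (star (U j)) ⊗ₖ vecMulVec (V j) (star (V j))))
        = ∑ j : J, ((η j : ℝ) : ℂ) := by
      rw [Matrix.trace_sum]
      refine Finset.sum_congr rfl fun j _ => ?_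
      rw [Matrix.trace_smul, Matrix.trace_kronecker]
      have h1 : Matrix.trace (vecMulVec (U j) (star (U j))) = 1 := by
        simp only [Matrix.trace, Matrix.diag_apply, vecMulVec_apply, Pi.star_apply,
          RCLike.star_def]
        rw [Finset.sum_congr rfl fun x _ => qpd_mul_conj (U j x), ← Complex.ofReal_sum, hUu j,
          Complex.ofReal_one]
      have h2 : Matrix.trace (vecMulVec (V j) (star (V j))) = 1 := by
        simp only [Matrix.trace, Matrix.diag_apply, vecMulVec_apply, Pi.star_apply,
          RCLike.star_def]
        rw [Finset.sum_congr rfl fun x _ => qpd_mul_conj (V j x), ← Complex.ofReal_sum, hVu j,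
          Complex.ofReal_one]
      rw [h1, h2, mul_one, smul_eq_mul, mul_one]
    rw [hL, hR] at h
    rw [Complex.ofReal_sum, ← h]
    norm_num
  have hsum : ∑ j : J, η j = 1 := by exact_mod_cast htr
  -- reindex over Fin (card J)
  let e := (Fintype.equivFin J).symm
  refine ⟨Fintype.card J, fun j => U (e j), fun j => V (e j), fun j => η (e j),
    fun j => hUu (e j), fun j => hVu (e j), ?_, ?_⟩
  · rw [Equiv.sum_comp e η, hsum]
  · rw [hG, ← Equiv.sum_comp e (fun j => ((η j : ℝ) : ℂ) •
      (vecMulVec (U j) (star (U j)) ⊗ₖ vecMulVec (V j) (star (V j))))]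

end QPD
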